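/- If every team in a league outcome with n teams has total points exactly 3(n−1), then no match of the outcome ends in a draw. -/

import Mathlib

open Finset

inductive MatchResult : Type
  | homeWin : MatchResult
  | draw : MatchResult
  | awayWin : MatchResult
  deriving DecidableEq

instance : Fintype MatchResult :=
  Fintype.ofList [.homeWin, .draw, .awayWin] (by intro x; cases x <;> simp)

/-- A league outcome: a result for each ordered pair of distinct teams
(the first component is the home team). -/
abbrev LeagueOutcome (n : ℕ) : Type :=
  {p : Fin n × Fin n // p.1 ≠ p.2} → MatchResult

/-- Points earned by the home team. -/
def homePts : MatchResult → ℕ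
  | .homeWin => 3
  | .draw => 1
  | .awayWin => 0

/-- Points earned by the away team. -/
def awayPts : MatchResult → ℕ
  | .homeWin => 0
  | .draw => 1
  | .awayWin => 3

/-- Total points of team `i`: sum over all matches of the points `i` earns in them. -/
def totalPoints {n : ℕ} (r : LeagueOutcome n) (i : Fin n) : ℕ :=
  ∑ m : {p : Fin n × Fin n // p.1 ≠ p.2},
    ((if m.val.1 = i then homePts (r m) else 0) +
     (if m.val.2 = i then awayPts (r m) else 0))

/-- Total points the other teams earn in their matches against team `i`. -/
def oppPoints {n : ℕ} (r : LeagueOutcome n) (i : Fin n) : ℕ :=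
  ∑ m : {p : Fin n × Fin n // p.1 ≠ p.2},
    ((if m.val.1 = i then awayPts (r m) else 0) +
     (if m.val.2 = i then homePts (r m) else 0))

/-- Number of matches that team `i` wins. -/
def wins {n : ℕ} (r : LeagueOutcome n) (i : Fin n) : ℕ :=
  (Finset.univ.filter (fun m : {p : Fin n × Fin n // p.1 ≠ p.2} =>
    (m.val.1 = i ∧ r m = .homeWin) ∨ (m.val.2 = i ∧ r m = .awayWin))).card

/-- Number of matches that team `i` draws. -/
def draws {n : ℕ} (r : LeagueOutcome n) (i : Fin n) : ℕ :=
  (Finset.univ.filter (fun m : {p : Fin n × Fin n // p.1 ≠ p.2} =>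
    (m.val.1 = i ∨ m.val.2 = i) ∧ r m = .draw)).card

/-- Number of matches that team `i` loses. -/
def losses {n : ℕ} (r : LeagueOutcome n) (i : Fin n) : ℕ :=
  (Finset.univ.filter (fun m : {p : Fin n × Fin n // p.1 ≠ p.2} =>
    (m.val.1 = i ∧ r m = .awayWin) ∨ (m.val.2 = i ∧ r m = .homeWin))).card

lemma card_diag_aux (n : ℕ) :
    Fintype.card {p : Fin n × Fin n // p.1 = p.2} = n := by
  rw [Fintype.card_congr (⟨fun x => x.1.1, fun i => ⟨(i, i), rfl⟩,
    fun x => by obtain ⟨⟨a, b⟩, h⟩ := x; simpa using h, fun i => rfl⟩ :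
    {p : Fin n × Fin n // p.1 = p.2} ≃ Fin n)]
  simp

lemma card_matches (n : ℕ) :
    Fintype.card {p : Fin n × Fin n // p.1 ≠ p.2} = n * n - n := by
  have := Fintype.card_subtype_compl (fun p : Fin n × Fin n => p.1 = p.2)
  simp only [card_diag_aux, Fintype.card_prod, Fintype.card_fin] at this
  exact this

lemma sum_total (n : ℕ) (r : LeagueOutcome n) :
    ∑ i : Fin n, totalPoints r i =
      ∑ m : {p : Fin n × Fin n // p.1 ≠ p.2}, (homePts (r m) + awayPts (r m)) := by
  unfold totalPoints
  rw [Finset.sum_comm]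
  refine Finset.sum_congr rfl fun m _ => ?_
  rw [Finset.sum_add_distrib, Finset.sum_ite_eq, Finset.sum_ite_eq]
  simp

/-- if every team has exactly `3(n−1)` points, no match is a draw. -/
theorem no_draws_of_max_score (n : ℕ) (r : LeagueOutcome n)
    (h : ∀ i, totalPoints r i = 3 * (n - 1)) :
    ∀ m, r m ≠ MatchResult.draw := by
  intro m hm
  have hn : 1 ≤ n := m.val.1.pos
  have hsum : ∑ i : Fin n, totalPoints r i = 3 * (n * n - n) := by
    rw [Finset.sum_congr rfl fun i _ => h i, Finset.sum_const, Finset.card_univ,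
      Fintype.card_fin, smul_eq_mul]
    have key : n * (n - 1) + n = n * n := by
      cases n with
      | zero => simp
      | succ k => simp only [Nat.succ_sub_one]; ring
    have : n * (n - 1) = n * n - n := by omega
    rw [← this]; ring
  have hcard := card_matches n
  have hle : ∀ x : {p : Fin n × Fin n // p.1 ≠ p.2},
      homePts (r x) + awayPts (r x) ≤ 3 := by
    intro x; cases r x <;> simp [homePts, awayPts]
  have hlt : ∑ x : {p : Fin n × Fin n // p.1 ≠ p.2}, (homePts (r x) + awayPts (r x)) <
      ∑ _x : {p : Fin n × Fin n // p.1 ≠ p.2}, 3 := by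
    refine Finset.sum_lt_sum (fun x _ => hle x) ⟨m, Finset.mem_univ m, ?_⟩
    rw [hm]; simp [homePts, awayPts]
  rw [Finset.sum_const, Finset.card_univ, hcard, smul_eq_mul,
    ← sum_total, hsum, mul_comm] at hlt
  exact lt_irrefl _ hlt
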